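/- Let R be a commutative Noetherian ring, M a finitely generated R-module, N a proper submodule of M, and 𝔭 a prime ideal of R. Then 𝔭 is an associated prime of M/N if and only if there exists a submodule K of M with N ⊊ K ⊆ M such that N is a 𝔭-prime submodule of K (i.e., (N :_R K) = 𝔭 and for all a ∈ R and x ∈ K, a·x ∈ N implies a ∈ 𝔭 or x ∈ N). -/

import Mathlib

theorem stmt0 {R M : Type*} [CommRing R] [IsNoetherianRing R] [AddCommGroup M]
    [Module R M] [Module.Finite R M] (N : Submodule R M) (hN : N ≠ ⊤)
    (p : Ideal R) (hp : p.IsPrime) :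
    p ∈ associatedPrimes R (M ⧸ N) ↔
      ∃ K : Submodule R M, N < K ∧ Submodule.colon N K = p ∧
        ∀ (a : R), ∀ x ∈ K, a • x ∈ N → a ∈ p ∨ x ∈ N := by
  constructor
  · intro hass
    obtain ⟨-, x, hx⟩ := isAssociatedPrime_iff.1 hass
    obtain ⟨m, rfl⟩ := Submodule.Quotient.mk_surjective N x
    have key : ∀ a : R, a ∈ p ↔ a • m ∈ N := by
      intro a
      rw [hx, Submodule.mem_colon_singleton, ← Submodule.Quotient.mk_smul, Submodule.mem_bot,
        Submodule.Quotient.mk_eq_zero]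
    have hm : m ∉ N := by
      intro h
      have : (1 : R) ∈ p := (key 1).2 (by simpa using h)
      exact hp.ne_top (Ideal.eq_top_of_isUnit_mem _ this isUnit_one)
    refine ⟨N ⊔ R ∙ m, lt_of_le_of_ne le_sup_left ?_, ?_, ?_⟩
    · intro h
      exact hm (h ▸ Submodule.mem_sup_right (Submodule.mem_span_singleton_self m))
    · ext a
      rw [Submodule.mem_colon]
      constructor
      · intro h
        exact (key a).2 (h m (Submodule.mem_sup_right (Submodule.mem_span_singleton_self m)))
      · intro ha y hy
        obtain ⟨n, hn, z, hz, rfl⟩ := Submodule.mem_sup.1 hy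
        obtain ⟨r, rfl⟩ := Submodule.mem_span_singleton.1 hz
        rw [smul_add]
        refine N.add_mem (N.smul_mem _ hn) ?_
        rw [smul_comm]
        exact N.smul_mem _ ((key a).1 ha)
    · intro a y hy hay
      obtain ⟨n, hn, z, hz, rfl⟩ := Submodule.mem_sup.1 hy
      obtain ⟨r, rfl⟩ := Submodule.mem_span_singleton.1 hz
      have h1 : a • (r • m) ∈ N := by
        have := N.smul_mem a hn
        rw [smul_add] at hay
        simpa using N.sub_mem hay this
      rw [smul_smul] at h1
      rcases hp.mem_or_mem ((key (a * r)).2 h1) with h | h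
      · exact Or.inl h
      · exact Or.inr (N.add_mem hn ((key r).1 h))
  · rintro ⟨K, hNK, hcolon, hprime⟩
    obtain ⟨x, hxK, hxN⟩ := SetLike.exists_of_lt hNK
    refine isAssociatedPrime_iff.2 ⟨hp, Submodule.Quotient.mk x, ?_⟩
    ext a
    rw [Submodule.mem_colon_singleton, ← Submodule.Quotient.mk_smul, Submodule.mem_bot,
      Submodule.Quotient.mk_eq_zero]
    constructor
    · intro ha
      have : a ∈ Submodule.colon N K := hcolon ▸ ha
      exact Submodule.mem_colon.1 this x hxK
    · intro h
      rcases hprime a x hxK h with h' | h'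
      · exact h'
      · exact absurd h' hxN
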